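/- arXiv:1703.06340 — 4 statements merged into one kernel-verified Lean document; each statement's English description precedes it below -/
import Mathlib

section
/- (First recurrence formula for the Euler–Poisson–Darboux equation.) Let γ = (γ_1,…,γ_n) be a multi-index with all γ_i > 0, let k ∈ ℝ, and let u = u(x,t) be a twice continuously differentiable solution of Δ_γ u = u_tt + ((2−k)/t) u_t for x ∈ ℝ^n_+, t > 0. Then v(x,t) = t^{1−k} u(x,t) solves Δ_γ v = v_tt + (k/t) v_t for x ∈ ℝ^n_+, t > 0. -/
open MeasureTheory Real Set Filter

open Topology

noncomputable section

/-- Partial derivative in the `i`-th coordinate. -/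
def pderiv' {n : ℕ} (i : Fin n) (f : (Fin n → ℝ) → ℝ) (x : Fin n → ℝ) : ℝ :=
  deriv (fun t => f (Function.update x i t)) (x i)

/-- The Laplace–Bessel operator `Δ_γ = Σ_i (∂²/∂x_i² + (γ_i/x_i) ∂/∂x_i)`. -/
def laplaceBessel {n : ℕ} (γ : Fin n → ℝ) (f : (Fin n → ℝ) → ℝ) (x : Fin n → ℝ) : ℝ :=
  ∑ i, (pderiv' i (pderiv' i f) x + γ i / x i * pderiv' i f x)

lemma pderiv'_const_mul {n : ℕ} (i : Fin n) (c : ℝ) (f : (Fin n → ℝ) → ℝ) (x : Fin n → ℝ) :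
    pderiv' i (fun y => c * f y) x = c * pderiv' i f x := by
  simp [pderiv', deriv_const_mul_field]

lemma laplaceBessel_const_mul {n : ℕ} (γ : Fin n → ℝ) (c : ℝ) (f : (Fin n → ℝ) → ℝ)
    (x : Fin n → ℝ) :
    laplaceBessel γ (fun y => c * f y) x = c * laplaceBessel γ f x := by
  unfold laplaceBessel
  rw [Finset.mul_sum]
  refine Finset.sum_congr rfl fun i _ => ?_
  have h1 : pderiv' i (fun y => c * f y) = fun y => c * pderiv' i f y := by
    funext y; exact pderiv'_const_mul i c f y
  rw [h1, pderiv'_const_mul]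
  dsimp only
  ring

/-- First recurrence formula for the Euler–Poisson–Darboux equation.
If `u` is a twice continuously differentiable solution of `Δ_γ u = u_tt + ((2-k)/t) u_t` on
`ℝ^n_+ × (0,∞)`, then `v(x,t) = t^{1-k} u(x,t)` solves `Δ_γ v = v_tt + (k/t) v_t` there. -/
theorem EPD_first_recurrence
    (n : ℕ) (γ : Fin n → ℝ) (hγ : ∀ i, 0 < γ i) (k : ℝ)
    (u : (Fin n → ℝ) → ℝ → ℝ)
    (hu : ContDiffOn ℝ 2 (fun p : (Fin n → ℝ) × ℝ => u p.1 p.2)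
      {p | (∀ i, 0 < p.1 i) ∧ 0 < p.2})
    (hpde : ∀ x : Fin n → ℝ, (∀ i, 0 < x i) → ∀ t : ℝ, 0 < t →
      laplaceBessel γ (fun x' => u x' t) x
        = deriv (deriv (u x)) t + (2 - k) / t * deriv (u x) t) :
    ∀ x : Fin n → ℝ, (∀ i, 0 < x i) → ∀ t : ℝ, 0 < t →
      laplaceBessel γ (fun x' => t ^ (1 - k) * u x' t) x
        = deriv (deriv (fun s : ℝ => s ^ (1 - k) * u x s)) t
            + k / t * deriv (fun s : ℝ => s ^ (1 - k) * u x s) t := by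
  intro x hx t ht
  -- openness of the domain
  have hopen : IsOpen {p : (Fin n → ℝ) × ℝ | (∀ i, 0 < p.1 i) ∧ 0 < p.2} := by
    have h1 : IsOpen {p : (Fin n → ℝ) × ℝ | ∀ i, 0 < p.1 i} := by
      have : {p : (Fin n → ℝ) × ℝ | ∀ i, 0 < p.1 i} = ⋂ i, {p | 0 < p.1 i} := by
        ext p; simp
      rw [this]
      exact isOpen_iInter_of_finite fun i =>
        isOpen_lt continuous_const ((continuous_apply i).comp continuous_fst)
    exact h1.inter (isOpen_lt continuous_const continuous_snd)
  -- `u x` is C² at every s > 0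
  have hg : ∀ s : ℝ, 0 < s → ContDiffAt ℝ 2 (u x) s := by
    intro s hs
    have hcd : ContDiffAt ℝ 2 (fun p : (Fin n → ℝ) × ℝ => u p.1 p.2) (x, s) :=
      hu.contDiffAt (hopen.mem_nhds ⟨hx, hs⟩)
    have hslice : ContDiffAt ℝ 2 (fun s' : ℝ => ((x, s') : (Fin n → ℝ) × ℝ)) s :=
      contDiffAt_const.prodMk contDiffAt_id
    exact hcd.comp s hslice
  set g : ℝ → ℝ := u x with hgdef
  -- eventual differentiability of g near t
  have hgd : ∀ᶠ s in 𝓝 t, DifferentiableAt ℝ g s := by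
    filter_upwards [(hg t ht).eventually (by simp)] with s hs
    exact hs.differentiableAt two_ne_zero
  -- differentiability of deriv g at t
  have hg'd : DifferentiableAt ℝ (deriv g) t := by
    obtain ⟨V, hV, hVcd⟩ := (hg t ht).contDiffOn (le_refl 2) (by simp)
    obtain ⟨W, hWV, hWopen, htW⟩ := mem_nhds_iff.mp hV
    have hWcd : ContDiffOn ℝ 2 g W := hVcd.mono hWV
    have h2 : ContDiffOn ℝ (1 + 1) g W := by
      convert hWcd using 2
      norm_num
    have := (contDiffOn_succ_iff_deriv_of_isOpen hWopen).mp h2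
    exact (this.2.2.differentiableOn one_ne_zero).differentiableAt (hWopen.mem_nhds htW)
  -- eventual positivity near t
  have hpos : ∀ᶠ s in 𝓝 t, 0 < s := eventually_gt_nhds ht
  -- first derivative of φ s = s ^ (1-k) * g s, eventually near t
  have h1 : ∀ᶠ s in 𝓝 t, deriv (fun s' : ℝ => s' ^ (1 - k) * g s') s
      = (1 - k) * s ^ (1 - k - 1) * g s + s ^ (1 - k) * deriv g s := by
    filter_upwards [hpos, hgd] with s hs hds
    exact ((hasDerivAt_rpow_const (Or.inl hs.ne')).mul hds.hasDerivAt).deriv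
  -- second derivative of φ at t
  have hrpow : HasDerivAt (fun s : ℝ => s ^ (1 - k)) ((1 - k) * t ^ (1 - k - 1)) t :=
    hasDerivAt_rpow_const (Or.inl ht.ne')
  have hrpow' : HasDerivAt (fun s : ℝ => s ^ (1 - k - 1))
      ((1 - k - 1) * t ^ (1 - k - 1 - 1)) t := hasDerivAt_rpow_const (Or.inl ht.ne')
  have hgt : DifferentiableAt ℝ g t := (hg t ht).differentiableAt two_ne_zero
  have hA : HasDerivAt (fun s : ℝ => (1 - k) * s ^ (1 - k - 1) * g s)
      ((1 - k) * ((1 - k - 1) * t ^ (1 - k - 1 - 1)) * g t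
        + (1 - k) * t ^ (1 - k - 1) * deriv g t) t := by
    have := ((hrpow'.const_mul (1 - k)).mul hgt.hasDerivAt)
    exact this
  have hB : HasDerivAt (fun s : ℝ => s ^ (1 - k) * deriv g s)
      ((1 - k) * t ^ (1 - k - 1) * deriv g t + t ^ (1 - k) * deriv (deriv g) t) t :=
    hrpow.mul hg'd.hasDerivAt
  have h2 : deriv (deriv (fun s : ℝ => s ^ (1 - k) * g s)) t
      = ((1 - k) * ((1 - k - 1) * t ^ (1 - k - 1 - 1)) * g t
          + (1 - k) * t ^ (1 - k - 1) * deriv g t)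
        + ((1 - k) * t ^ (1 - k - 1) * deriv g t + t ^ (1 - k) * deriv (deriv g) t) := by
    have heq : deriv (fun s' : ℝ => s' ^ (1 - k) * g s')
        =ᶠ[𝓝 t] fun s => (1 - k) * s ^ (1 - k - 1) * g s + s ^ (1 - k) * deriv g s := h1
    rw [heq.deriv_eq]
    exact (hA.add hB).deriv
  have h1t : deriv (fun s' : ℝ => s' ^ (1 - k) * g s') t
      = (1 - k) * t ^ (1 - k - 1) * g t + t ^ (1 - k) * deriv g t := h1.self_of_nhds
  -- left-hand side
  have hL : laplaceBessel γ (fun x' => t ^ (1 - k) * u x' t) x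
      = t ^ (1 - k) * (deriv (deriv g) t + (2 - k) / t * deriv g t) := by
    rw [laplaceBessel_const_mul, hpde x hx t ht]
  rw [hL, h2, h1t]
  have e1 : t ^ (1 - k - 1) = t ^ (1 - k) / t := by
    rw [show (1 - k - 1 : ℝ) = (1 - k) - 1 by ring, Real.rpow_sub ht, Real.rpow_one]
  have e2 : t ^ (1 - k - 1 - 1) = t ^ (1 - k) / t / t := by
    rw [show (1 - k - 1 - 1 : ℝ) = (1 - k) - 1 - 1 by ring, Real.rpow_sub ht,
      Real.rpow_sub ht, Real.rpow_one]
  rw [e1, e2]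
  field_simp
  ring
end
end

section
/- Let γ = (γ_1,…,γ_n) be a multi-index with all γ_i > 0 and let u = u(x,t) be a solution of Δ_γ u = u_tt − (1/t) u_t (the Euler–Poisson–Darboux equation with parameter k = −1) for x ∈ ℝ^n_+, t > 0, satisfying u(x,0) = f(x) and u_t(x,0) = 0. If the second derivative u_tt(x,0) exists (i.e., u_tt extends continuously to t = 0), then Δ_γ f(x) = 0, i.e. f is B-harmonic; in this case u(x,t) = f(x) is a solution of this Cauchy problem. -/
open MeasureTheory Real Set Filter

noncomputable section

private lemma hasDerivAt_of_fderivWithin {E F' : Type*} [NormedAddCommGroup E]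
    [NormedSpace ℝ E] [NormedAddCommGroup F'] [NormedSpace ℝ F']
    {S : Set E} {F : E → F'} {L : E →L[ℝ] F'} {c : ℝ → E} {e : E} {s₀ : ℝ} {p : E}
    (hF : HasFDerivWithinAt F L S p) (hc : HasDerivAt c e s₀) (hc0 : c s₀ = p)
    (hmem : ∀ᶠ s in nhds s₀, c s ∈ S) :
    HasDerivAt (fun s => F (c s)) (L e) s₀ := by
  rw [← hc0] at hF
  have h1 : HasDerivWithinAt (F ∘ c) (L e) (c ⁻¹' S) s₀ :=
    hF.comp_hasDerivWithinAt s₀ hc.hasDerivWithinAt (fun s hs => hs)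
  exact h1.hasDerivAt hmem

private lemma main_aux
    (n : ℕ) (γ : Fin n → ℝ)
    (u : (Fin n → ℝ) → ℝ → ℝ) (f : (Fin n → ℝ) → ℝ)
    (hu : ContDiffOn ℝ 2 (fun p : (Fin n → ℝ) × ℝ => u p.1 p.2)
      {p | (∀ i, 0 < p.1 i) ∧ 0 ≤ p.2})
    (hpde : ∀ x : Fin n → ℝ, (∀ i, 0 < x i) → ∀ t : ℝ, 0 < t →
      laplaceBessel γ (fun x' => u x' t) x
        = deriv (deriv (u x)) t - (1 / t) * deriv (u x) t)
    (hinit : ∀ x : Fin n → ℝ, (∀ i, 0 < x i) → u x 0 = f x)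
    (x : Fin n → ℝ) (hx : ∀ i, 0 < x i) : laplaceBessel γ f x = 0 := by
  classical
  set S : Set ((Fin n → ℝ) × ℝ) := {p | (∀ i, 0 < p.1 i) ∧ 0 ≤ p.2} with hSdef
  set U : (Fin n → ℝ) × ℝ → ℝ := fun p => u p.1 p.2 with hUdef
  -- convexity and unique differentiability of S
  have hconv : Convex ℝ S := by
    intro p hp q hq a b ha hb hab
    refine ⟨fun i => ?_, ?_⟩
    · have hpi := hp.1 i; have hqi := hq.1 i
      have : (a • p + b • q).1 i = a * p.1 i + b * q.1 i := rfl
      rw [this]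
      rcases ha.eq_or_lt with rfl | ha'
      · simp only [zero_add] at hab; subst hab; simpa using hqi
      · nlinarith [mul_nonneg hb hqi.le]
    · have : (a • p + b • q).2 = a * p.2 + b * q.2 := rfl
      rw [this]
      exact add_nonneg (mul_nonneg ha hp.2) (mul_nonneg hb hq.2)
  have hSuniq : UniqueDiffOn ℝ S := by
    refine uniqueDiffOn_convex hconv ?_
    have hopen : IsOpen {p : (Fin n → ℝ) × ℝ | (∀ i, 0 < p.1 i) ∧ 0 < p.2} := by
      have h1 : IsOpen {p : (Fin n → ℝ) × ℝ | ∀ i, 0 < p.1 i} := by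
        have : {p : (Fin n → ℝ) × ℝ | ∀ i, 0 < p.1 i}
            = ⋂ i, (fun p : (Fin n → ℝ) × ℝ => p.1 i) ⁻¹' Ioi 0 := by
          ext p; simp
        rw [this]
        exact isOpen_iInter_of_finite fun i =>
          ((continuous_apply i).comp continuous_fst).isOpen_preimage _ isOpen_Ioi
      have h2 : IsOpen {p : (Fin n → ℝ) × ℝ | 0 < p.2} :=
        continuous_snd.isOpen_preimage (Ioi 0) isOpen_Ioi
      exact h1.inter h2
    refine ⟨(fun _ => 1, 1), ?_⟩
    rw [mem_interior_iff_mem_nhds]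
    refine Filter.mem_of_superset (hopen.mem_nhds ?_) ?_
    · exact ⟨fun i => one_pos, one_pos⟩
    · exact fun p hp => ⟨hp.1, hp.2.le⟩
  -- derivative data
  have huU : ContDiffOn ℝ 2 U S := hu
  set D := fderivWithin ℝ U S with hDdef
  set D2 := fderivWithin ℝ D S with hD2def
  have hUdiff : ∀ p ∈ S, HasFDerivWithinAt U (D p) S p := fun p hp =>
    ((huU.differentiableOn (by norm_num)) p hp).hasFDerivWithinAt
  have hDcd : ContDiffOn ℝ 1 D S := huU.fderivWithin hSuniq (by norm_num)
  have hDdiff : ∀ p ∈ S, HasFDerivWithinAt D (D2 p) S p := fun p hp =>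
    ((hDcd.differentiableOn one_ne_zero) p hp).hasFDerivWithinAt
  have hDcont : ContinuousOn D S := hDcd.continuousOn
  have hD2cont : ContinuousOn D2 S := hDcd.continuousOn_fderivWithin hSuniq le_rfl
  -- curves in the i-direction
  have hcurve : ∀ (x' : Fin n → ℝ), (∀ j, 0 < x' j) → ∀ t : ℝ, 0 ≤ t → ∀ i : Fin n,
      ∀ᶠ s in nhds (x' i), (Function.update x' i s, t) ∈ S := by
    intro x' hx' t ht i
    filter_upwards [isOpen_Ioi.mem_nhds (hx' i)] with s hs
    refine ⟨fun j => ?_, ht⟩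
    rcases eq_or_ne j i with rfl | hne
    · simpa using hs
    · simpa [Function.update_apply, hne] using hx' j
  -- first order partials
  have key1 : ∀ (x' : Fin n → ℝ), (∀ j, 0 < x' j) → ∀ t : ℝ, 0 ≤ t → ∀ i : Fin n,
      HasDerivAt (fun s => u (Function.update x' i s) t)
        (D (x', t) (Pi.single i 1, 0)) (x' i) := by
    intro x' hx' t ht i
    have hc : HasDerivAt (fun s => (Function.update x' i s, t))
        ((Pi.single i 1 : Fin n → ℝ), (0 : ℝ)) (x' i) :=
      (hasDerivAt_update x' i (x' i)).prodMk (hasDerivAt_const (x' i) t)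
    exact hasDerivAt_of_fderivWithin (hUdiff (x', t) ⟨hx', ht⟩) hc
      (by rw [Function.update_eq_self]) (hcurve x' hx' t ht i)
  -- second order derivative of D along i-direction
  have keyD2 : ∀ t : ℝ, 0 ≤ t → ∀ i : Fin n,
      HasDerivAt (fun s => D (Function.update x i s, t) ((Pi.single i 1 : Fin n → ℝ), (0:ℝ)))
        ((D2 (x, t) (Pi.single i 1, 0)) (Pi.single i 1, 0)) (x i) := by
    intro t ht i
    have hc : HasDerivAt (fun s => (Function.update x i s, t))
        ((Pi.single i 1 : Fin n → ℝ), (0 : ℝ)) (x i) :=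
      (hasDerivAt_update x i (x i)).prodMk (hasDerivAt_const (x i) t)
    have h := hasDerivAt_of_fderivWithin (hDdiff (x, t) ⟨hx, ht⟩) hc
      (by rw [Function.update_eq_self]) (hcurve x hx t ht i)
    have h2 := h.clm_apply
      (hasDerivAt_const (x i) ((Pi.single i 1 : Fin n → ℝ), (0 : ℝ)))
    simpa using h2
  -- the key computation of the Laplace-Bessel operator
  have keyG : ∀ (g : (Fin n → ℝ) → ℝ) (t : ℝ), 0 ≤ t →
      (∀ x' : Fin n → ℝ, (∀ j, 0 < x' j) → g x' = u x' t) →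
      laplaceBessel γ g x
        = ∑ i, ((D2 (x, t) (Pi.single i 1, 0)) (Pi.single i 1, 0)
            + γ i / x i * (D (x, t) (Pi.single i 1, 0))) := by
    intro g t ht hg
    have hg1 : ∀ (x' : Fin n → ℝ), (∀ j, 0 < x' j) → ∀ i,
        pderiv' i g x' = D (x', t) (Pi.single i 1, 0) := by
      intro x' hx' i
      have hev : (fun s => g (Function.update x' i s))
          =ᶠ[nhds (x' i)] (fun s => u (Function.update x' i s) t) := by
        filter_upwards [hcurve x' hx' t ht i] with s hs
        exact hg _ hs.1
      have hrfl : pderiv' i g x' = deriv (fun s => g (Function.update x' i s)) (x' i) := rfl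
      rw [hrfl, hev.deriv_eq]
      exact (key1 x' hx' t ht i).deriv
    rw [laplaceBessel]
    refine Finset.sum_congr rfl fun i _ => ?_
    have hg2 : pderiv' i (pderiv' i g) x
        = (D2 (x, t) (Pi.single i 1, 0)) (Pi.single i 1, 0) := by
      have hev : (fun s => pderiv' i g (Function.update x i s))
          =ᶠ[nhds (x i)]
          (fun s => D (Function.update x i s, t) ((Pi.single i 1 : Fin n → ℝ), (0:ℝ))) := by
        filter_upwards [hcurve x hx t ht i] with s hs
        exact hg1 _ hs.1 i
      have hrfl : pderiv' i (pderiv' i g) x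
          = deriv (fun s => pderiv' i g (Function.update x i s)) (x i) := rfl
      rw [hrfl, hev.deriv_eq]
      exact (keyD2 t ht i).deriv
    rw [hg2, hg1 x hx i]
  -- time direction
  set ψ1 : ℝ → ℝ := fun t => D (x, t) ((0 : Fin n → ℝ), (1 : ℝ)) with hψ1def
  set ψ2 : ℝ → ℝ := fun t => (D2 (x, t) ((0 : Fin n → ℝ), (1 : ℝ))) ((0 : Fin n → ℝ), (1 : ℝ))
    with hψ2def
  have hcurvet : ∀ t : ℝ, 0 < t → ∀ᶠ t' in nhds t, ((x : Fin n → ℝ), t') ∈ S := by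
    intro t ht
    filter_upwards [isOpen_Ioi.mem_nhds ht] with t' ht'
    exact ⟨hx, le_of_lt ht'⟩
  have hct : ∀ t : ℝ, HasDerivAt (fun t' => ((x : Fin n → ℝ), t')) ((0 : Fin n → ℝ), (1 : ℝ)) t :=
    fun t => (hasDerivAt_const t x).prodMk (hasDerivAt_id t)
  have hut : ∀ t : ℝ, 0 < t → HasDerivAt (u x) (ψ1 t) t := by
    intro t ht
    exact hasDerivAt_of_fderivWithin (hUdiff (x, t) ⟨hx, ht.le⟩) (hct t) rfl (hcurvet t ht)
  have hψ1deriv : ∀ t : ℝ, 0 < t → HasDerivAt ψ1 (ψ2 t) t := by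
    intro t ht
    have h := hasDerivAt_of_fderivWithin (hDdiff (x, t) ⟨hx, ht.le⟩) (hct t) rfl (hcurvet t ht)
    have h2 := h.clm_apply (hasDerivAt_const t ((0 : Fin n → ℝ), (1 : ℝ)))
    simpa using h2
  have hderiv1 : ∀ t : ℝ, 0 < t → deriv (u x) t = ψ1 t := fun t ht => (hut t ht).deriv
  have hderiv2 : ∀ t : ℝ, 0 < t → deriv (deriv (u x)) t = ψ2 t := by
    intro t ht
    have hev : deriv (u x) =ᶠ[nhds t] ψ1 := by
      filter_upwards [isOpen_Ioi.mem_nhds ht] with t' ht'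
      exact hderiv1 t' ht'
    rw [hev.deriv_eq]
    exact (hψ1deriv t ht).deriv
  -- continuity of everything on [0, ∞)
  have hmapt : MapsTo (fun t : ℝ => ((x : Fin n → ℝ), t)) (Ici 0) S := fun t ht => ⟨hx, ht⟩
  have hcontc : ContinuousOn (fun t : ℝ => ((x : Fin n → ℝ), t)) (Ici 0) :=
    (continuous_const.prodMk continuous_id).continuousOn
  have hDx : ContinuousOn (fun t : ℝ => D (x, t)) (Ici 0) := hDcont.comp hcontc hmapt
  have hD2x : ContinuousOn (fun t : ℝ => D2 (x, t)) (Ici 0) := hD2cont.comp hcontc hmapt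
  have happly : ∀ v : (Fin n → ℝ) × ℝ, ContinuousOn (fun t : ℝ => D (x, t) v) (Ici 0) :=
    fun v => (ContinuousLinearMap.apply ℝ ℝ v).continuous.comp_continuousOn hDx
  have happly2 : ∀ v : (Fin n → ℝ) × ℝ, ContinuousOn (fun t : ℝ => (D2 (x, t) v) v) (Ici 0) :=
    fun v => (ContinuousLinearMap.apply ℝ ℝ v).continuous.comp_continuousOn
      ((ContinuousLinearMap.apply ℝ _ v).continuous.comp_continuousOn hD2x)
  set G : ℝ → ℝ := fun t => ∑ i, ((D2 (x, t) (Pi.single i 1, 0)) (Pi.single i 1, 0)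
      + γ i / x i * (D (x, t) (Pi.single i 1, 0))) with hGdef
  have hGcont : ContinuousOn G (Ici 0) := by
    refine continuousOn_finset_sum _ fun i _ => ?_
    exact (happly2 _).add (continuousOn_const.mul (happly _))
  have hG0 : laplaceBessel γ f x = G 0 := keyG f 0 le_rfl fun x' hx' => (hinit x' hx').symm
  have hsub : nhdsWithin (0 : ℝ) (Ioi 0) ≤ nhdsWithin 0 (Ici 0) :=
    nhdsWithin_mono 0 Ioi_subset_Ici_self
  have hGlim : Tendsto G (nhdsWithin 0 (Ioi 0)) (nhds (G 0)) :=
    (hGcont 0 self_mem_Ici).mono_left hsub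
  have hψ1lim : Tendsto ψ1 (nhdsWithin 0 (Ioi 0)) (nhds (ψ1 0)) :=
    ((happly ((0 : Fin n → ℝ), (1 : ℝ))) 0 self_mem_Ici).mono_left hsub
  have hψ2lim : Tendsto ψ2 (nhdsWithin 0 (Ioi 0)) (nhds (ψ2 0)) :=
    ((happly2 ((0 : Fin n → ℝ), (1 : ℝ))) 0 self_mem_Ici).mono_left hsub
  -- rearranged PDE
  have hpde' : ∀ t : ℝ, 0 < t → ψ1 t / t = ψ2 t - G t := by
    intro t ht
    have hGt : G t = laplaceBessel γ (fun x' => u x' t) x :=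
      (keyG _ t ht.le fun _ _ => rfl).symm
    rw [hGt, hpde x hx t ht, hderiv2 t ht, hderiv1 t ht]
    field_simp
    ring
  have hMlim : Tendsto (fun t => ψ1 t / t) (nhdsWithin 0 (Ioi 0)) (nhds (ψ2 0 - G 0)) := by
    refine Filter.Tendsto.congr' ?_ (hψ2lim.sub hGlim)
    filter_upwards [self_mem_nhdsWithin] with t ht
    exact (hpde' t ht).symm
  have hψ10 : ψ1 0 = 0 := by
    have hid : Tendsto (fun t : ℝ => t) (nhdsWithin 0 (Ioi 0)) (nhds 0) :=
      Filter.tendsto_id.mono_right nhdsWithin_le_nhds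
    have h1 : Tendsto ψ1 (nhdsWithin 0 (Ioi 0)) (nhds ((ψ2 0 - G 0) * 0)) := by
      refine Filter.Tendsto.congr' ?_ (hMlim.mul hid)
      filter_upwards [self_mem_nhdsWithin] with t ht
      exact div_mul_cancel₀ _ (ne_of_gt ht)
    have := tendsto_nhds_unique hψ1lim h1
    simpa using this
  have hLhop : Tendsto (fun t => ψ1 t / t) (nhdsWithin 0 (Ioi 0)) (nhds (ψ2 0)) := by
    refine HasDerivAt.lhopital_zero_right_on_Ioo (f' := ψ2) (g' := fun _ => (1 : ℝ))
      one_pos (fun t ht => hψ1deriv t ht.1) (fun t _ => hasDerivAt_id t)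
      (fun _ _ => one_ne_zero) ?_ ?_ ?_
    · have h := hψ1lim; rw [hψ10] at h; exact h
    · exact Filter.tendsto_id.mono_right nhdsWithin_le_nhds
    · simpa using hψ2lim
  have hfin : ψ2 0 - G 0 = ψ2 0 := tendsto_nhds_unique hMlim hLhop
  rw [hG0]
  linarith

/-- Let `u` solve the Euler–Poisson–Darboux equation with parameter
`k = -1`, `Δ_γ u = u_tt - (1/t) u_t` (`x ∈ ℝ^n_+`, `t > 0`), with `u(x,0) = f(x)` and
`u_t(x,0) = 0`. If `u_tt` extends continuously to `t = 0` (i.e. `u_tt(x,0)` exists), then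
`Δ_γ f = 0`, i.e. `f` is B-harmonic; in this case `u(x,t) = f(x)` is a solution of this
Cauchy problem. -/
theorem EPD_k_neg_one
    (n : ℕ) (γ : Fin n → ℝ) (hγ : ∀ i, 0 < γ i)
    (u : (Fin n → ℝ) → ℝ → ℝ) (f : (Fin n → ℝ) → ℝ)
    (hu : ContDiffOn ℝ 2 (fun p : (Fin n → ℝ) × ℝ => u p.1 p.2)
      {p | (∀ i, 0 < p.1 i) ∧ 0 ≤ p.2})
    (hpde : ∀ x : Fin n → ℝ, (∀ i, 0 < x i) → ∀ t : ℝ, 0 < t →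
      laplaceBessel γ (fun x' => u x' t) x
        = deriv (deriv (u x)) t - (1 / t) * deriv (u x) t)
    (hinit : ∀ x : Fin n → ℝ, (∀ i, 0 < x i) → u x 0 = f x)
    (hinit' : ∀ x : Fin n → ℝ, (∀ i, 0 < x i) → deriv (u x) 0 = 0)
    (hutt : ∀ x : Fin n → ℝ, (∀ i, 0 < x i) →
      ∃ L : ℝ, Filter.Tendsto (fun t => deriv (deriv (u x)) t) (nhdsWithin 0 (Set.Ioi 0))
        (nhds L)) :
    (∀ x : Fin n → ℝ, (∀ i, 0 < x i) → laplaceBessel γ f x = 0)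
    ∧ ((∀ x : Fin n → ℝ, (∀ i, 0 < x i) → ∀ t : ℝ, 0 < t →
          laplaceBessel γ (fun x' => (fun (_ : ℝ) => f x') t) x
            = deriv (deriv (fun (_ : ℝ) => f x)) t
                - (1 / t) * deriv (fun (_ : ℝ) => f x) t)
        ∧ (∀ x : Fin n → ℝ, (∀ i, 0 < x i) → (fun (_ : ℝ) => f x) 0 = f x)
        ∧ (∀ x : Fin n → ℝ, (∀ i, 0 < x i) → deriv (fun (_ : ℝ) => f x) 0 = 0)) := by
  have main : ∀ x : Fin n → ℝ, (∀ i, 0 < x i) → laplaceBessel γ f x = 0 :=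
    fun x hx => main_aux n γ u f hu hpde hinit x hx
  refine ⟨main, ?_, fun x hx => rfl, fun x hx => deriv_const 0 (f x)⟩
  intro x hx t ht
  have hd : deriv (fun _ : ℝ => f x) = fun _ : ℝ => (0 : ℝ) := by
    funext s; exact deriv_const s (f x)
  show laplaceBessel γ f x = _
  rw [main x hx, hd]
  simp
end
end

section
/- Let γ = (γ_1,…,γ_n) be a multi-index with all γ_i > 0, let k ∈ {−3, −5, −7, …}, and let f be a sufficiently smooth function on the closure of ℝ^n_+, even in each variable, that is B-polyharmonic of order (1−k)/2, i.e. Δ_γ^{(1−k)/2} f = 0. Then the function u^k(x,t) = f(x) + Σ_{h=1}^{−(k+1)/2} [Δ_γ^h f(x) / ((k+1)(k+3)⋯(k+2h−1))] · t^{2h}/(2·4⋯(2h)) solves the Cauchy problem Δ_γ u = u_tt + (k/t) u_t for x ∈ ℝ^n_+, t > 0, with u(x,0) = f(x) and u_t(x,0) = 0. -/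
open MeasureTheory Real Set Filter

noncomputable section

namespace EPDaux

variable {n : ℕ}

lemma hasDerivAt_update (x : Fin n → ℝ) (i : Fin n) (s : ℝ) :
    HasDerivAt (fun t => Function.update x i t) (Pi.single i 1) s := by
  rw [hasDerivAt_pi]
  intro j
  rcases eq_or_ne j i with rfl | hj
  · simpa using hasDerivAt_id' s
  · simpa [Function.update_of_ne hj, Pi.single_eq_of_ne hj] using hasDerivAt_const s (x j)

lemma hasDerivAt_comp_update {g : (Fin n → ℝ) → ℝ} {x : Fin n → ℝ}
    (hg : DifferentiableAt ℝ g x) (i : Fin n) :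
    HasDerivAt (fun s => g (Function.update x i s)) (fderiv ℝ g x (Pi.single i 1)) (x i) := by
  have h1 := hasDerivAt_update x i (x i)
  have h2 : HasFDerivAt g (fderiv ℝ g x) ((fun t => Function.update x i t) (x i)) := by
    simpa using hg.hasFDerivAt
  exact h2.comp_hasDerivAt (x i) h1

lemma pderiv'_eq {g : (Fin n → ℝ) → ℝ} {x : Fin n → ℝ}
    (hg : DifferentiableAt ℝ g x) (i : Fin n) :
    pderiv' i g x = fderiv ℝ g x (Pi.single i 1) :=
  (hasDerivAt_comp_update hg i).deriv

lemma eventually_update_mem {S : Set (Fin n → ℝ)} (hS : IsOpen S) {x : Fin n → ℝ}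
    (hx : x ∈ S) (i : Fin n) :
    ∀ᶠ s in nhds (x i), Function.update x i s ∈ S := by
  have hc : ContinuousAt (fun s => Function.update x i s) (x i) :=
    (hasDerivAt_update x i (x i)).continuousAt
  have hm : S ∈ nhds ((fun s => Function.update x i s) (x i)) := by
    simpa using hS.mem_nhds hx
  exact hc.eventually_mem hm

end EPDaux

namespace EPDaux2
open EPDaux

variable {n : ℕ}

lemma contDiffAt_F1 {g : (Fin n → ℝ) → ℝ} {x : Fin n → ℝ} {p : ℕ}
    (hg : ContDiffAt ℝ ((p+1:ℕ)) g x) (i : Fin n) :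
    ContDiffAt ℝ (p:ℕ) (fun y => fderiv ℝ g y (Pi.single i 1)) x :=
  ContDiffAt.clm_apply (hg.fderiv_right (by push_cast; exact le_refl _)) contDiffAt_const

lemma pderiv'_pderiv'_eq {S : Set (Fin n → ℝ)} (hS : IsOpen S) {g : (Fin n → ℝ) → ℝ}
    {x : Fin n → ℝ} (hg : ∀ y ∈ S, ContDiffAt ℝ ((2:ℕ)) g y) (hx : x ∈ S) (i : Fin n) :
    pderiv' i (pderiv' i g) x
      = fderiv ℝ (fun y => fderiv ℝ g y (Pi.single i 1)) x (Pi.single i 1) := by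
  have hev : (fun s => pderiv' i g (Function.update x i s)) =ᶠ[nhds (x i)]
      (fun s => fderiv ℝ g (Function.update x i s) (Pi.single i 1)) :=
    (eventually_update_mem hS hx i).mono fun s hs =>
      pderiv'_eq ((hg _ hs).differentiableAt (by norm_num)) i
  have hdiff : DifferentiableAt ℝ (fun y => fderiv ℝ g y (Pi.single i 1)) x :=
    (contDiffAt_F1 (p:=1) (by exact_mod_cast hg x hx) i).differentiableAt (by norm_num)
  calc pderiv' i (pderiv' i g) x
      = deriv (fun s => pderiv' i g (Function.update x i s)) (x i) := rfl
    _ = deriv (fun s => fderiv ℝ g (Function.update x i s) (Pi.single i 1)) (x i) :=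
        hev.deriv_eq
    _ = _ := (hasDerivAt_comp_update hdiff i).deriv

lemma laplaceBessel_sum {S : Set (Fin n → ℝ)} (hS : IsOpen S) {ι : Type*} (A : Finset ι)
    (g : ι → (Fin n → ℝ) → ℝ) (c : ι → ℝ)
    (hg : ∀ j ∈ A, ∀ y ∈ S, ContDiffAt ℝ ((2:ℕ)) (g j) y)
    {x : Fin n → ℝ} (hx : x ∈ S) (γ : Fin n → ℝ) :
    laplaceBessel γ (fun y => ∑ j ∈ A, c j * g j y) x
      = ∑ j ∈ A, c j * laplaceBessel γ (g j) x := by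
  have hdiff : ∀ j ∈ A, ∀ y ∈ S, DifferentiableAt ℝ (g j) y := fun j hj y hy =>
    (hg j hj y hy).differentiableAt (by norm_num)
  have h1 : ∀ (i : Fin n), ∀ y ∈ S, pderiv' i (fun y => ∑ j ∈ A, c j * g j y) y
      = ∑ j ∈ A, c j * fderiv ℝ (g j) y (Pi.single i 1) := by
    intro i y hy
    exact (HasDerivAt.fun_sum fun j hj =>
      (hasDerivAt_comp_update (hdiff j hj y hy) i).const_mul (c j)).deriv
  have h2 : ∀ i : Fin n, pderiv' i (pderiv' i (fun y => ∑ j ∈ A, c j * g j y)) x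
      = ∑ j ∈ A, c j * pderiv' i (pderiv' i (g j)) x := by
    intro i
    have hev : (fun s => pderiv' i (fun y => ∑ j ∈ A, c j * g j y) (Function.update x i s))
        =ᶠ[nhds (x i)]
        (fun s => ∑ j ∈ A, c j * fderiv ℝ (g j) (Function.update x i s) (Pi.single i 1)) :=
      (eventually_update_mem hS hx i).mono fun s hs => h1 i _ hs
    have hD : HasDerivAt
        (fun s => ∑ j ∈ A, c j * fderiv ℝ (g j) (Function.update x i s) (Pi.single i 1))
        (∑ j ∈ A, c j * fderiv ℝ (fun y => fderiv ℝ (g j) y (Pi.single i 1)) x (Pi.single i 1))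
        (x i) :=
      HasDerivAt.fun_sum fun j hj =>
        (hasDerivAt_comp_update
          ((contDiffAt_F1 (p:=1) (by exact_mod_cast hg j hj x hx) i).differentiableAt
            (by norm_num)) i).const_mul (c j)
    calc pderiv' i (pderiv' i (fun y => ∑ j ∈ A, c j * g j y)) x
        = deriv (fun s => pderiv' i (fun y => ∑ j ∈ A, c j * g j y) (Function.update x i s))
            (x i) := rfl
      _ = _ := hev.deriv_eq
      _ = _ := hD.deriv
      _ = ∑ j ∈ A, c j * pderiv' i (pderiv' i (g j)) x :=
          Finset.sum_congr rfl fun j hj => by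
            rw [pderiv'_pderiv'_eq hS (fun y hy => hg j hj y hy) hx i]
  unfold laplaceBessel
  calc ∑ i, (pderiv' i (pderiv' i (fun y => ∑ j ∈ A, c j * g j y)) x
        + γ i / x i * pderiv' i (fun y => ∑ j ∈ A, c j * g j y) x)
      = ∑ i, ∑ j ∈ A, c j * (pderiv' i (pderiv' i (g j)) x
          + γ i / x i * pderiv' i (g j) x) := by
        refine Finset.sum_congr rfl fun i _ => ?_
        rw [h2 i, h1 i x hx, Finset.mul_sum, ← Finset.sum_add_distrib]
        refine Finset.sum_congr rfl fun j hj => ?_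
        rw [pderiv'_eq (hdiff j hj x hx) i]; ring
    _ = _ := by
        rw [Finset.sum_comm]
        exact Finset.sum_congr rfl fun j _ => by rw [← Finset.mul_sum]

lemma laplaceBessel_contDiffAt {S : Set (Fin n → ℝ)} (hS : IsOpen S) {g : (Fin n → ℝ) → ℝ}
    (p : ℕ) (hg : ∀ y ∈ S, ContDiffAt ℝ ((p+2:ℕ)) g y) {x : Fin n → ℝ} (hx : x ∈ S)
    (hx0 : ∀ i, x i ≠ 0) (γ : Fin n → ℝ) :
    ContDiffAt ℝ (p:ℕ) (laplaceBessel γ g) x := by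
  have h2 : ∀ y ∈ S, ContDiffAt ℝ ((2:ℕ)) g y := fun y hy =>
    (hg y hy).of_le (by push_cast; exact le_add_self)
  have hev : laplaceBessel γ g =ᶠ[nhds x] (fun y =>
      ∑ i, (fderiv ℝ (fun z => fderiv ℝ g z (Pi.single i 1)) y (Pi.single i 1)
        + γ i / y i * fderiv ℝ g y (Pi.single i 1))) := by
    filter_upwards [hS.mem_nhds hx] with y hy
    unfold laplaceBessel
    refine Finset.sum_congr rfl fun i _ => ?_
    rw [pderiv'_pderiv'_eq hS h2 hy i,
      pderiv'_eq ((h2 y hy).differentiableAt (by norm_num)) i]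
  refine ContDiffAt.congr_of_eventuallyEq ?_ hev
  refine ContDiffAt.sum fun i _ => ContDiffAt.add ?_ ?_
  · have hF1 : ContDiffAt ℝ ((p+1:ℕ)) (fun z => fderiv ℝ g z (Pi.single i 1)) x :=
      contDiffAt_F1 (p:=p+1) (by exact_mod_cast hg x hx) i
    exact ContDiffAt.clm_apply (hF1.fderiv_right (by push_cast; exact le_refl _))
      contDiffAt_const
  · refine ContDiffAt.mul ?_ ((contDiffAt_F1 (p:=p)
      ((hg x hx).of_le (by exact_mod_cast (by omega : p+1 ≤ p+2))) i))
    exact ContDiffAt.div contDiffAt_const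
      ((ContinuousLinearMap.proj (R:=ℝ) (φ:=fun _ : Fin n => ℝ) i).contDiff.contDiffAt)
      (hx0 i)

end EPDaux2


/-- Let `k = -(2m+3)` (`m ∈ ℕ`), i.e. `k ∈ {-3,-5,-7,…}`, and let `f` be a
sufficiently smooth function on the closure of `ℝ^n_+`, even in each variable, which is
B-polyharmonic of order `(1-k)/2 = m+2`. Then
`u^k(x,t) = f(x) + Σ_{h=1}^{-(k+1)/2} [Δ_γ^h f(x)/((k+1)(k+3)⋯(k+2h-1))] · t^{2h}/(2·4⋯(2h))`
solves `Δ_γ u = u_tt + (k/t) u_t` (`x ∈ ℝ^n_+`, `t > 0`) with `u(x,0) = f(x)`,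
`u_t(x,0) = 0`. -/
theorem EPD_negative_odd_k
    (n : ℕ) (γ : Fin n → ℝ) (hγ : ∀ i, 0 < γ i)
    (m : ℕ) (k : ℝ) (hk : k = -(2 * (m : ℝ) + 3))
    (f : (Fin n → ℝ) → ℝ)
    (hf : ContDiffOn ℝ ((2 * (m + 2) : ℕ) : ℕ∞) f {x | ∀ i, 0 ≤ x i})
    (heven : ∀ (i : Fin n) (x : Fin n → ℝ), f (Function.update x i (-(x i))) = f x)
    (hpoly : ∀ x : Fin n → ℝ, (∀ i, 0 < x i) → (laplaceBessel γ)^[m + 2] f x = 0)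
    (u : (Fin n → ℝ) → ℝ → ℝ)
    (hu : ∀ (x : Fin n → ℝ) (t : ℝ),
      u x t = f x + ∑ h ∈ Finset.Icc 1 (m + 1),
        ((laplaceBessel γ)^[h] f x / ∏ j ∈ Finset.range h, (k + 1 + 2 * (j : ℝ)))
          * t ^ (2 * h) / ∏ j ∈ Finset.range h, (2 * (j : ℝ) + 2)) :
    (∀ x : Fin n → ℝ, (∀ i, 0 < x i) → ∀ t : ℝ, 0 < t →
      laplaceBessel γ (fun x' => u x' t) x
        = deriv (deriv (u x)) t + k / t * deriv (u x) t)
    ∧ (∀ x : Fin n → ℝ, (∀ i, 0 ≤ x i) → u x 0 = f x)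
    ∧ (∀ x : Fin n → ℝ, (∀ i, 0 ≤ x i) → deriv (u x) 0 = 0) := by
  have hS : IsOpen {x : Fin n → ℝ | ∀ i, 0 < x i} := by
    have : {x : Fin n → ℝ | ∀ i, 0 < x i} = ⋂ i, (fun x : Fin n → ℝ => x i) ⁻¹' Set.Ioi 0 := by
      ext y; simp [Set.mem_iInter]
    rw [this]
    exact isOpen_iInter_of_finite fun i => (continuous_apply i).isOpen_preimage _ isOpen_Ioi
  set S : Set (Fin n → ℝ) := {x | ∀ i, 0 < x i}
  have hfS : ∀ y ∈ S, ContDiffAt ℝ ((2*(m+2):ℕ)) f y := by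
    intro y hy
    have h1 : ContDiffAt ℝ (((2 * (m + 2) : ℕ) : ℕ∞)) f y :=
      (hf.mono (fun z hz i => (hz i).le)).contDiffAt (hS.mem_nhds hy)
    exact_mod_cast h1
  -- iterated smoothness
  have hiter : ∀ h : ℕ, h ≤ m + 2 → ∀ y ∈ S,
      ContDiffAt ℝ ((2*(m+2-h):ℕ)) ((laplaceBessel γ)^[h] f) y := by
    intro h
    induction h with
    | zero => intro _ y hy; simpa using hfS y hy
    | succ h ih =>
      intro hh y hy
      rw [Function.iterate_succ_apply']
      refine EPDaux2.laplaceBessel_contDiffAt hS (2*(m+2-(h+1))) (fun z hz => ?_) hy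
        (fun i => (hy i).ne') γ
      have h2 := ih (by omega) z hz
      have hp : (2*(m+2-h):ℕ) = 2*(m+2-(h+1)) + 2 := by omega
      rw [hp] at h2
      exact h2
  have hsm2 : ∀ j ∈ Finset.range (m+2), ∀ y ∈ S,
      ContDiffAt ℝ ((2:ℕ)) ((laplaceBessel γ)^[j] f) y := by
    intro j hj y hy
    have hj' : j < m + 2 := Finset.mem_range.mp hj
    exact (hiter j (by omega) y hy).of_le
      (by exact_mod_cast (by omega : 2 ≤ 2*(m+2-j)))
  -- nonvanishing of products
  have hPne : ∀ j, j ≤ m+1 → (∏ r ∈ Finset.range j, (k + 1 + 2*(r:ℝ))) ≠ 0 := by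
    intro j hj
    refine Finset.prod_ne_zero_iff.mpr fun r hr => ?_
    have hr' : r < j := Finset.mem_range.mp hr
    have hrm : (r:ℝ) ≤ m := by exact_mod_cast (by omega : r ≤ m)
    rw [hk]; intro h0; linarith
  have hQne : ∀ j, (∏ r ∈ Finset.range j, (2*(r:ℝ) + 2)) ≠ 0 := fun j =>
    Finset.prod_ne_zero_iff.mpr fun r _ => by positivity
  have hins : Finset.range (m+2) = insert 0 (Finset.Icc 1 (m+1)) := by
    ext a; simp [Finset.mem_range, Finset.mem_Icc]; omega
  -- part 2
  have part2 : ∀ x : Fin n → ℝ, (∀ i, 0 ≤ x i) → u x 0 = f x := by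
    intro x hx
    rw [hu]
    rw [Finset.sum_eq_zero, add_zero]
    intro h hh
    have h1 : 1 ≤ h := (Finset.mem_Icc.mp hh).1
    rw [zero_pow (by omega : 2*h ≠ 0), mul_zero, zero_div]
  -- part 3
  have part3 : ∀ x : Fin n → ℝ, (∀ i, 0 ≤ x i) → deriv (u x) 0 = 0 := by
    intro x hx
    have hfun : u x = fun t => f x + ∑ h ∈ Finset.Icc 1 (m+1),
        ((laplaceBessel γ)^[h] f x / ∏ r ∈ Finset.range h, (k + 1 + 2*(r:ℝ)))
          * t^(2*h) / ∏ r ∈ Finset.range h, (2*(r:ℝ) + 2) := funext (hu x)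
    rw [hfun]
    have hD : HasDerivAt (fun t : ℝ => f x + ∑ h ∈ Finset.Icc 1 (m+1),
        ((laplaceBessel γ)^[h] f x / ∏ r ∈ Finset.range h, (k + 1 + 2*(r:ℝ)))
          * t^(2*h) / ∏ r ∈ Finset.range h, (2*(r:ℝ) + 2))
        (0 + ∑ h ∈ Finset.Icc 1 (m+1),
          ((laplaceBessel γ)^[h] f x / ∏ r ∈ Finset.range h, (k + 1 + 2*(r:ℝ)))
            * ((2*h:ℕ) * (0:ℝ)^(2*h-1)) / ∏ r ∈ Finset.range h, (2*(r:ℝ) + 2)) 0 :=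
      (hasDerivAt_const 0 (f x)).add (HasDerivAt.fun_sum fun h hh =>
        ((hasDerivAt_pow (2*h) (0:ℝ)).const_mul _).div_const _)
    rw [hD.deriv, zero_add]
    refine Finset.sum_eq_zero fun h hh => ?_
    have h1 : 1 ≤ h := (Finset.mem_Icc.mp hh).1
    rw [zero_pow (by omega : 2*h - 1 ≠ 0), mul_zero, mul_zero, zero_div]
  refine ⟨?_, part2, part3⟩
  intro x hx t ht
  set g : ℕ → (Fin n → ℝ) → ℝ := fun j => (laplaceBessel γ)^[j] f with hgdef
  set c : ℕ → ℝ := fun j => t^(2*j) /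
    ((∏ r ∈ Finset.range j, (k + 1 + 2*(r:ℝ))) * ∏ r ∈ Finset.range j, (2*(r:ℝ) + 2)) with hcdef
  set d : ℕ → ℝ := fun j => g j x /
    ((∏ r ∈ Finset.range j, (k + 1 + 2*(r:ℝ))) * ∏ r ∈ Finset.range j, (2*(r:ℝ) + 2)) with hddef
  -- LHS
  have hGfun : (fun x' => u x' t) = fun x' => ∑ j ∈ Finset.range (m+2), c j * g j x' := by
    funext x'
    rw [hu, hins, Finset.sum_insert (by simp)]
    have hc0 : c 0 * g 0 x' = f x' := by simp [hcdef, hgdef]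
    rw [hc0]
    congr 1
    refine Finset.sum_congr rfl fun h _ => ?_
    simp only [hcdef, hgdef]
    ring
  have hLHS : laplaceBessel γ (fun x' => u x' t) x
      = ∑ j ∈ Finset.range (m+2), c j * g (j+1) x := by
    rw [hGfun, EPDaux2.laplaceBessel_sum hS (Finset.range (m+2)) g c
      (fun j hj y hy => hsm2 j hj y hy) hx γ]
    refine Finset.sum_congr rfl fun j _ => ?_
    show c j * laplaceBessel γ ((laplaceBessel γ)^[j] f) x = c j * (laplaceBessel γ)^[j+1] f x
    rw [Function.iterate_succ_apply']
  -- time derivatives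
  have hufun : u x = fun s => ∑ j ∈ Finset.range (m+2), d j * s^(2*j) := by
    funext s
    rw [hu, hins, Finset.sum_insert (by simp)]
    have hd0 : d 0 * s^(2*0) = f x := by simp [hddef, hgdef]
    rw [hd0]
    congr 1
    refine Finset.sum_congr rfl fun h _ => ?_
    simp only [hddef, hgdef]
    ring
  have hderiv1 : deriv (u x) = fun s => ∑ j ∈ Finset.range (m+2),
      d j * ((2*j:ℕ) * s^(2*j-1)) := by
    funext s
    rw [hufun]
    exact (HasDerivAt.fun_sum fun j _ => (hasDerivAt_pow (2*j) s).const_mul (d j)).deriv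
  have hderiv2 : deriv (deriv (u x)) t = ∑ j ∈ Finset.range (m+2),
      d j * ((2*j:ℕ) * ((2*j-1:ℕ) * t^(2*j-1-1))) := by
    rw [hderiv1]
    exact (HasDerivAt.fun_sum fun j _ =>
      (((hasDerivAt_pow (2*j-1) t).const_mul ((2*j:ℕ):ℝ)).const_mul (d j))).deriv
  rw [hLHS, hderiv2, hderiv1]
  rw [Finset.mul_sum, ← Finset.sum_add_distrib]
  rw [Finset.sum_range_succ (fun j => c j * g (j+1) x) (m+1)]
  have hgtop : g (m+1+1) x = 0 := hpoly x hx
  rw [hgtop, mul_zero, add_zero]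
  rw [Finset.sum_range_succ' (fun j => d j * ((2*j:ℕ) * ((2*j-1:ℕ) * t^(2*j-1-1)))
      + k / t * (d j * ((2*j:ℕ) * t^(2*j-1)))) (m+1)]
  have hF0 : d 0 * ((2*0:ℕ) * ((2*0-1:ℕ) * t^(2*0-1-1)))
      + k / t * (d 0 * ((2*0:ℕ) * t^(2*0-1))) = 0 := by norm_num
  rw [hF0, add_zero]
  refine Finset.sum_congr rfl fun j hj => ?_
  have hjm : j ≤ m := by have := Finset.mem_range.mp hj; omega
  have e1 : 2*(j+1)-1 = 2*j+1 := by omega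
  have e2 : 2*j+1-1 = 2*j := by omega
  have e3 : 2*(j+1) = 2*j+2 := by omega
  rw [e1, e2, e3]
  simp only [hcdef, hddef]
  rw [Finset.prod_range_succ (fun r => (k + 1 + 2*(r:ℝ))) j,
    Finset.prod_range_succ (fun r => (2*(r:ℝ) + 2)) j]
  have hA : k + 1 + 2*(j:ℝ) ≠ 0 := by
    rw [hk]
    have hjm' : (j:ℝ) ≤ m := by exact_mod_cast hjm
    intro h0; linarith
  have hts : t^(2*j+1) = t^(2*j) * t := pow_succ t (2*j)
  rw [hts]
  have hP := hPne j (by omega)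
  have hQ := hQne j
  have h22 : (2*(j:ℝ) + 2) ≠ 0 := by positivity
  push_cast
  field_simp
  ring
end
end

section
/- Let f be a continuous compactly supported function on [0,∞) (the even extension of a continuous compactly supported even function on ℝ). Then for every x ≥ 0, lim_{γ → 0⁺} ∫_0^∞ (ᵞT^y_x f)(x) y^γ dy = ∫_0^∞ f(t) dt. -/
open MeasureTheory Real Set Filter

noncomputable section

/-- The normalizing constant `C(ν) = Γ((ν+1)/2)/(√π Γ(ν/2))` of the generalized translation. -/
def transC (ν : ℝ) : ℝ := Real.Gamma ((ν + 1) / 2) / (Real.sqrt π * Real.Gamma (ν / 2))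

/-- One-dimensional generalized translation `(ᵛT^y_x f)(x)` generated by the Bessel operator
`B_ν`. -/
def genTrans1 (ν x y : ℝ) (f : ℝ → ℝ) : ℝ :=
  transC ν * ∫ φ in (0:ℝ)..π,
    f (Real.sqrt (x ^ 2 + y ^ 2 - 2 * x * y * Real.cos φ)) * Real.sin φ ^ (ν - 1)

lemma gauss_rpow {s : ℝ} (hs : 0 < s) :
    ∫ x in Ioi (0:ℝ), x ^ (s - 1) * Real.exp (-x ^ 2) = Real.Gamma (s / 2) / 2 := by
  have key := integral_comp_rpow_Ioi (fun y => Real.exp (-y) * y ^ (s / 2 - 1)) two_ne_zero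
  rw [← Real.Gamma_eq_integral (by positivity : (0:ℝ) < s / 2)] at key
  have heq : ∀ x ∈ Ioi (0:ℝ),
      (|(2:ℝ)| * x ^ ((2:ℝ) - 1)) • (Real.exp (-(x ^ (2:ℝ))) * (x ^ (2:ℝ)) ^ (s / 2 - 1))
        = 2 * (x ^ (s - 1) * Real.exp (-x ^ 2)) := by
    intro x hx
    have hx : (0:ℝ) < x := hx
    have h1 : x ^ ((2:ℝ) - 1) = x := by norm_num
    have h2 : x ^ (2:ℝ) = x ^ (2:ℕ) := by
      rw [← Real.rpow_natCast x 2]; norm_num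
    have h3 : (x ^ (2:ℝ)) ^ (s / 2 - 1) = x ^ (s - 2) := by
      rw [← Real.rpow_mul hx.le]; congr 1; ring
    have h4 : x * x ^ (s - 2) = x ^ (s - 1) := by
      nth_rewrite 1 [← Real.rpow_one x]
      rw [← Real.rpow_add hx]; congr 1; ring
    rw [smul_eq_mul, h3, h1, h2, ← h4]
    rw [abs_of_pos (by norm_num : (0:ℝ) < 2)]
    ring
  rw [setIntegral_congr_fun measurableSet_Ioi heq, integral_const_mul] at key
  linarith

lemma sin_rpow_int {γ : ℝ} (hγ : 0 < γ) :
    ∫ φ in Ioo (0:ℝ) π, Real.sin φ ^ (γ - 1)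
      = Real.sqrt π * Real.Gamma (γ / 2) / Real.Gamma ((γ + 1) / 2) := by
  set w : ℝ → ℝ := fun t => if 0 < t then t ^ (γ - 1) else 0 with hw
  have hcart : ∫ u : ℝ × ℝ, Real.exp (-u.1 ^ 2) * (w u.2 * Real.exp (-u.2 ^ 2))
      = Real.sqrt π * (Real.Gamma (γ / 2) / 2) := by
    rw [Measure.volume_eq_prod]
    refine (integral_prod_mul (fun t : ℝ => Real.exp (-t ^ 2))
      (fun t : ℝ => w t * Real.exp (-t ^ 2))).trans ?_
    congr 1
    · simpa using integral_gaussian 1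
    · have hind : (fun t : ℝ => w t * Real.exp (-t ^ 2))
          = (Ioi (0:ℝ)).indicator (fun t => t ^ (γ - 1) * Real.exp (-t ^ 2)) := by
        ext t
        by_cases h : 0 < t <;> simp [hw, h, Set.indicator, mem_Ioi]
      rw [hind, integral_indicator measurableSet_Ioi]
      exact gauss_rpow hγ
  have hpolar : ∫ u : ℝ × ℝ, Real.exp (-u.1 ^ 2) * (w u.2 * Real.exp (-u.2 ^ 2))
      = (Real.Gamma ((γ + 1) / 2) / 2) * ∫ φ in Ioo (0:ℝ) π, Real.sin φ ^ (γ - 1) := by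
    rw [← integral_comp_polarCoord_symm (fun u : ℝ × ℝ =>
      Real.exp (-u.1 ^ 2) * (w u.2 * Real.exp (-u.2 ^ 2)))]
    have h1 : ∀ p ∈ polarCoord.target, p.1 • (fun u : ℝ × ℝ =>
        Real.exp (-u.1 ^ 2) * (w u.2 * Real.exp (-u.2 ^ 2))) (polarCoord.symm p)
        = (fun r => r ^ γ * Real.exp (-r ^ 2)) p.1
          * (fun θ => if 0 < Real.sin θ then Real.sin θ ^ (γ - 1) else 0) p.2 := by
      rintro ⟨r, θ⟩ hp
      rw [polarCoord_target] at hp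
      obtain ⟨hr, hθ⟩ := hp
      have hr : (0:ℝ) < r := hr
      simp only [polarCoord_symm_apply, smul_eq_mul]
      have hexp : Real.exp (-(r * Real.cos θ) ^ 2) * Real.exp (-(r * Real.sin θ) ^ 2)
          = Real.exp (-r ^ 2) := by
        rw [← Real.exp_add]; congr 1
        linear_combination (-(r:ℝ) ^ 2) * (Real.sin_sq_add_cos_sq θ)
      have hrγ : r * r ^ (γ - 1) = r ^ γ := by
        nth_rewrite 1 [← Real.rpow_one r]
        rw [← Real.rpow_add hr]; congr 1; ring
      by_cases hs : 0 < Real.sin θ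
      · have hpos : 0 < r * Real.sin θ := mul_pos hr hs
        simp only [hw, if_pos hs, if_pos hpos]
        rw [Real.mul_rpow hr.le hs.le, ← hexp, ← hrγ]
        ring
      · have hsin : Real.sin θ ≤ 0 := not_lt.1 hs
        have hnpos : ¬ 0 < r * Real.sin θ := not_lt.2 (by nlinarith)
        simp [hw, hs, hnpos]
    rw [setIntegral_congr_fun polarCoord.open_target.measurableSet h1, polarCoord_target,
      Measure.volume_eq_prod]
    refine (setIntegral_prod_mul (fun r : ℝ => r ^ γ * Real.exp (-r ^ 2))
      (fun θ : ℝ => if 0 < Real.sin θ then Real.sin θ ^ (γ - 1) else 0)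
      (Ioi 0) (Ioo (-π) π)).trans ?_
    congr 1
    · have h := gauss_rpow (by linarith : (0:ℝ) < γ + 1)
      rw [show γ + 1 - 1 = γ by ring] at h
      exact h
    · rw [setIntegral_eq_of_subset_of_ae_diff_eq_zero measurableSet_Ioo.nullMeasurableSet
        (Ioo_subset_Ioo (by linarith [Real.pi_pos] : -π ≤ (0:ℝ)) le_rfl) ?_]
      · exact setIntegral_congr_fun measurableSet_Ioo fun θ hθ =>
          if_pos (Real.sin_pos_of_pos_of_lt_pi hθ.1 hθ.2)
      · apply ae_of_all
        rintro θ ⟨hθt, hθs⟩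
        have hle : θ ≤ 0 := by
          by_contra h
          exact hθs ⟨lt_of_not_ge h, hθt.2⟩
        exact if_neg (not_lt.2 (Real.sin_nonpos_of_nonpos_of_neg_pi_le hle hθt.1.le))
  have hG : (0:ℝ) < Real.Gamma ((γ + 1) / 2) := Real.Gamma_pos_of_pos (by linarith)
  rw [hcart] at hpolar
  rw [eq_div_iff hG.ne']
  linarith [hpolar]

lemma key_identity (f : ℝ → ℝ) (hf : Continuous f) (hsupp : HasCompactSupport f)
    (x : ℝ) {γ : ℝ} (hγ : 0 < γ) :
    ∫ y in Ioi (0:ℝ), genTrans1 γ x y f * y ^ γ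
      = transC γ * ((∫ t in Ioi (0:ℝ), f t * t ^ γ) * ∫ φ in Ioo (0:ℝ) π, Real.sin φ ^ (γ - 1)) := by
  -- bound and support radius
  obtain ⟨C, hC⟩ := hf.bounded_above_of_compact_support hsupp
  have hC0 : 0 ≤ C := le_trans (norm_nonneg _) (hC 0)
  obtain ⟨M₀, hM₀⟩ := hsupp.isBounded.subset_closedBall 0
  set M : ℝ := max M₀ 1 with hM
  have hM1 : (1:ℝ) ≤ M := le_max_right _ _
  have hMf : ∀ t : ℝ, M < |t| → f t = 0 := by
    intro t ht
    apply image_eq_zero_of_notMem_tsupport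
    intro hmem
    have := hM₀ hmem
    rw [Metric.mem_closedBall, Real.dist_eq, sub_zero] at this
    have : |t| ≤ M := le_trans this (le_max_left _ _)
    linarith
  -- the weight and auxiliary planar functions
  set w : ℝ → ℝ := fun t => if 0 < t then t ^ (γ - 1) else 0 with hw
  have hwmeas : Measurable w := by
    have : w = (Ioi (0:ℝ)).indicator fun t => t ^ (γ - 1) := by
      ext t; by_cases h : 0 < t <;> simp [hw, h, Set.indicator, mem_Ioi]
    rw [this]
    exact (by fun_prop : Measurable fun t : ℝ => t ^ (γ - 1)).indicator measurableSet_Ioi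
  set g : ℝ × ℝ → ℝ := fun u => f (Real.sqrt (u.1 ^ 2 + u.2 ^ 2)) * w u.2 with hg
  set gx : ℝ × ℝ → ℝ := fun u => g (u - (x, 0)) with hgx
  have hgmeas : Measurable g := by
    have h1 : Continuous fun u : ℝ × ℝ => f (Real.sqrt (u.1 ^ 2 + u.2 ^ 2)) := by
      apply hf.comp; exact Real.continuous_sqrt.comp (by continuity)
    exact h1.measurable.mul (hwmeas.comp measurable_snd)
  -- integrability of g
  have hgint : Integrable g := by
    have hD : Integrable (fun u : ℝ × ℝ => ((Icc (-M) M).indicator (fun _ => C) u.1)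
        * ((Ioc (0:ℝ) M).indicator (fun t => t ^ (γ - 1)) u.2)) := by
      rw [Measure.volume_eq_prod]
      apply Integrable.mul_prod
      · exact (integrableOn_const measure_Icc_lt_top.ne).integrable_indicator
          measurableSet_Icc
      · refine ((intervalIntegrable_iff_integrableOn_Ioc_of_le (by linarith)).1
          (intervalIntegral.intervalIntegrable_rpow' (by linarith))).integrable_indicator
          measurableSet_Ioc
    refine hD.mono' hgmeas.aestronglyMeasurable (ae_of_all _ fun u => ?_)
    have hDnn : 0 ≤ ((Icc (-M) M).indicator (fun _ => C) u.1)
        * ((Ioc (0:ℝ) M).indicator (fun t => t ^ (γ - 1)) u.2) := by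
      apply mul_nonneg
      · exact Set.indicator_nonneg (fun _ _ => hC0) _
      · exact Set.indicator_nonneg (fun t ht => Real.rpow_nonneg ht.1.le _) _
    rcases le_or_gt u.2 0 with h2 | h2
    · have : w u.2 = 0 := if_neg (not_lt.2 h2)
      simp only [hg, this, mul_zero, norm_zero]
      exact hDnn
    · rcases le_or_gt (Real.sqrt (u.1 ^ 2 + u.2 ^ 2)) M with hle | hgt
      · have h1 : |u.1| ≤ M := by
          rw [← Real.sqrt_sq_eq_abs]
          exact le_trans (Real.sqrt_le_sqrt (by nlinarith)) hle
        have h2' : u.2 ≤ M := by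
          calc u.2 = Real.sqrt (u.2 ^ 2) := (Real.sqrt_sq h2.le).symm
            _ ≤ Real.sqrt (u.1 ^ 2 + u.2 ^ 2) := Real.sqrt_le_sqrt (by nlinarith)
            _ ≤ M := hle
        rw [Set.indicator_of_mem (mem_Icc.2 (abs_le.1 h1)),
          Set.indicator_of_mem (mem_Ioc.2 ⟨h2, h2'⟩)]
        have : ‖g u‖ = |f (Real.sqrt (u.1 ^ 2 + u.2 ^ 2))| * u.2 ^ (γ - 1) := by
          rw [hg]
          simp only [hw, if_pos h2]
          rw [Real.norm_eq_abs, abs_mul, abs_of_nonneg (Real.rpow_nonneg h2.le _)]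
        rw [this]
        exact mul_le_mul (hC _) le_rfl (Real.rpow_nonneg h2.le _) hC0
      · have : f (Real.sqrt (u.1 ^ 2 + u.2 ^ 2)) = 0 :=
          hMf _ (by rwa [abs_of_nonneg (Real.sqrt_nonneg _)])
        simp only [hg, this, zero_mul, norm_zero]
        exact hDnn
  have hgxint : Integrable gx := hgint.comp_sub_right (x, 0)
  -- data for the change of variables
  set S : Set (ℝ × ℝ) := Ioi (0:ℝ) ×ˢ Ioo (0:ℝ) π with hS
  have hSm : MeasurableSet S := measurableSet_Ioi.prod measurableSet_Ioo
  have hSsub : S ⊆ polarCoord.target := by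
    rw [polarCoord_target]
    exact prod_mono subset_rfl (Ioo_subset_Ioo (by linarith [Real.pi_pos] : -π ≤ (0:ℝ)) le_rfl)
  have hinj : InjOn (polarCoord.symm) S := polarCoord.symm.injOn.mono hSsub
  set Hfun : ℝ × ℝ → ℝ := fun p =>
    f (Real.sqrt (x ^ 2 + p.1 ^ 2 - 2 * x * p.1 * Real.cos p.2)) * Real.sin p.2 ^ (γ - 1)
      * p.1 ^ γ with hHfun
  have hpt : ∀ p ∈ S, p.1 • gx (polarCoord.symm p) = Hfun p := by
    rintro ⟨r, θ⟩ ⟨hr, hθ⟩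
    have hr : (0:ℝ) < r := hr
    have hsθ : 0 < Real.sin θ := Real.sin_pos_of_pos_of_lt_pi hθ.1 hθ.2
    have hrγ : r * r ^ (γ - 1) = r ^ γ := by
      nth_rewrite 1 [← Real.rpow_one r]
      rw [← Real.rpow_add hr]; congr 1; ring
    simp only [hgx, hg, hHfun, polarCoord_symm_apply, smul_eq_mul, Prod.mk_sub_mk, sub_zero]
    have harg : (r * Real.cos θ - x) ^ 2 + (r * Real.sin θ) ^ 2
        = x ^ 2 + r ^ 2 - 2 * x * r * Real.cos θ := by
      linear_combination (r:ℝ) ^ 2 * (Real.sin_sq_add_cos_sq θ)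
    rw [harg]
    simp only [hw, if_pos (mul_pos hr hsθ)]
    rw [Real.mul_rpow hr.le hsθ.le, ← hrγ]
    ring
  -- integrability of Hfun on S via the change of variables
  have hHint : IntegrableOn Hfun S := by
    have hiff := integrableOn_image_iff_integrableOn_abs_det_fderiv_smul volume hSm
      (fun p _ => (hasFDerivAt_polarCoord_symm p).hasFDerivWithinAt) hinj gx
    have h1 := hiff.1 hgxint.integrableOn
    refine h1.congr_fun (fun p hp => ?_) hSm
    have hdet : (LinearMap.toContinuousLinearMap ((Matrix.toLin (Module.Basis.finTwoProd ℝ)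
        (Module.Basis.finTwoProd ℝ)) !![Real.cos p.2, -p.1 * Real.sin p.2;
          Real.sin p.2, p.1 * Real.cos p.2])).det = p.1 := by
      conv_rhs => rw [← one_mul p.1, ← Real.cos_sq_add_sin_sq p.2]
      simp only [neg_mul, LinearMap.det_toContinuousLinearMap, LinearMap.det_toLin,
        Matrix.det_fin_two_of, sub_neg_eq_add]
      ring
    beta_reduce
    rw [show (fderivPolarCoordSymm p).det = p.1 from hdet, abs_of_pos (hp.1 : (0:ℝ) < p.1)]
    exact hpt p hp
  -- main computation
  calc ∫ y in Ioi (0:ℝ), genTrans1 γ x y f * y ^ γ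
      = ∫ y in Ioi (0:ℝ), transC γ * ((∫ φ in Ioo (0:ℝ) π,
          f (Real.sqrt (x ^ 2 + y ^ 2 - 2 * x * y * Real.cos φ)) * Real.sin φ ^ (γ - 1)) * y ^ γ) := by
        refine setIntegral_congr_fun measurableSet_Ioi fun y _ => ?_
        simp only [genTrans1]
        rw [intervalIntegral.integral_of_le Real.pi_pos.le, integral_Ioc_eq_integral_Ioo]
        ring
    _ = transC γ * ∫ y in Ioi (0:ℝ), ∫ φ in Ioo (0:ℝ) π, Hfun (y, φ) := by
        rw [integral_const_mul]
        congr 1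
        refine setIntegral_congr_fun measurableSet_Ioi fun y _ => ?_
        rw [← integral_mul_const]
    _ = transC γ * ∫ p in S, Hfun p := by
        congr 1
        rw [hS, Measure.volume_eq_prod] at hHint ⊢
        exact (setIntegral_prod Hfun hHint).symm
    _ = transC γ * ∫ p in S, p.1 • gx (polarCoord.symm p) := by
        congr 1
        exact setIntegral_congr_fun hSm fun p hp => (hpt p hp).symm
    _ = transC γ * ∫ p in polarCoord.target, p.1 • gx (polarCoord.symm p) := by
        congr 1
        refine (setIntegral_eq_of_subset_of_ae_diff_eq_zero
          polarCoord.open_target.measurableSet.nullMeasurableSet hSsub ?_).symm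
        apply ae_of_all
        rintro ⟨r, θ⟩ ⟨hin, hout⟩
        rw [polarCoord_target] at hin
        obtain ⟨hr, hθ⟩ := hin
        have hr : (0:ℝ) < r := hr
        have hθ0 : θ ≤ 0 := by
          by_contra h
          exact hout ⟨hr, ⟨lt_of_not_ge h, hθ.2⟩⟩
        have hsin : Real.sin θ ≤ 0 := Real.sin_nonpos_of_nonpos_of_neg_pi_le hθ0 hθ.1.le
        have hwz : w (r * Real.sin θ) = 0 := if_neg (not_lt.2 (by nlinarith))
        simp only [hgx, hg, polarCoord_symm_apply, Prod.mk_sub_mk, sub_zero, hwz, mul_zero,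
          smul_eq_mul]
    _ = transC γ * ∫ u, gx u := by rw [integral_comp_polarCoord_symm]
    _ = transC γ * ∫ u, g u := by
        congr 1
        exact integral_sub_right_eq_self g (x, 0)
    _ = transC γ * ∫ p in polarCoord.target, p.1 • g (polarCoord.symm p) := by
        rw [integral_comp_polarCoord_symm]
    _ = transC γ * ∫ p in S, p.1 • g (polarCoord.symm p) := by
        congr 1
        refine setIntegral_eq_of_subset_of_ae_diff_eq_zero
          polarCoord.open_target.measurableSet.nullMeasurableSet hSsub ?_
        apply ae_of_all
        rintro ⟨r, θ⟩ ⟨hin, hout⟩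
        rw [polarCoord_target] at hin
        obtain ⟨hr, hθ⟩ := hin
        have hr : (0:ℝ) < r := hr
        have hθ0 : θ ≤ 0 := by
          by_contra h
          exact hout ⟨hr, ⟨lt_of_not_ge h, hθ.2⟩⟩
        have hsin : Real.sin θ ≤ 0 := Real.sin_nonpos_of_nonpos_of_neg_pi_le hθ0 hθ.1.le
        have hwz : w (r * Real.sin θ) = 0 := if_neg (not_lt.2 (by nlinarith))
        simp only [hg, polarCoord_symm_apply, hwz, mul_zero, smul_eq_mul]
    _ = transC γ * ∫ p in S, (fun r => f r * r ^ γ) p.1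
          * (fun θ => Real.sin θ ^ (γ - 1)) p.2 := by
        congr 1
        refine setIntegral_congr_fun hSm ?_
        rintro ⟨r, θ⟩ ⟨hr, hθ⟩
        have hr : (0:ℝ) < r := hr
        have hsθ : 0 < Real.sin θ := Real.sin_pos_of_pos_of_lt_pi hθ.1 hθ.2
        have hrγ : r * r ^ (γ - 1) = r ^ γ := by
          nth_rewrite 1 [← Real.rpow_one r]
          rw [← Real.rpow_add hr]; congr 1; ring
        simp only [hg, polarCoord_symm_apply, smul_eq_mul]
        have harg : (r * Real.cos θ) ^ 2 + (r * Real.sin θ) ^ 2 = r ^ 2 := by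
          linear_combination (r:ℝ) ^ 2 * (Real.sin_sq_add_cos_sq θ)
        rw [harg, Real.sqrt_sq hr.le]
        simp only [hw, if_pos (mul_pos hr hsθ)]
        rw [Real.mul_rpow hr.le hsθ.le, ← hrγ]
        ring
    _ = transC γ * ((∫ t in Ioi (0:ℝ), f t * t ^ γ) * ∫ φ in Ioo (0:ℝ) π,
          Real.sin φ ^ (γ - 1)) := by
        congr 1
        rw [hS, Measure.volume_eq_prod]
        exact setIntegral_prod_mul (fun r : ℝ => f r * r ^ γ)
          (fun θ : ℝ => Real.sin θ ^ (γ - 1)) (Ioi 0) (Ioo 0 π)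



/-- For a continuous compactly supported (even) function `f` and `x ≥ 0`,
`lim_{γ → 0⁺} ∫_0^∞ (ᵞT^y_x f)(x) y^γ dy = ∫_0^∞ f(t) dt`. -/
theorem genTrans_weighted_integral_limit
    (f : ℝ → ℝ) (hf : Continuous f) (hsupp : HasCompactSupport f)
    (heven : ∀ t : ℝ, f (-t) = f t)
    (x : ℝ) (hx : 0 ≤ x) :
    Filter.Tendsto (fun γ : ℝ => ∫ y in Set.Ioi (0:ℝ), genTrans1 γ x y f * y ^ γ)
      (nhdsWithin 0 (Set.Ioi 0))
      (nhds (∫ t in Set.Ioi (0:ℝ), f t)) := by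
  have key0 : ∀ γ : ℝ, 0 < γ →
      (∫ y in Ioi (0:ℝ), genTrans1 γ x y f * y ^ γ) = ∫ t in Ioi (0:ℝ), f t * t ^ γ := by
    intro γ hγ
    rw [key_identity f hf hsupp x hγ, sin_rpow_int hγ]
    have h1 : 0 < Real.Gamma (γ / 2) := Real.Gamma_pos_of_pos (by linarith)
    have h2 : 0 < Real.Gamma ((γ + 1) / 2) := Real.Gamma_pos_of_pos (by linarith)
    have h3 : (0:ℝ) < Real.sqrt π := Real.sqrt_pos.2 Real.pi_pos
    simp only [transC]
    field_simp
  have hev : (fun γ : ℝ => ∫ t in Ioi (0:ℝ), f t * t ^ γ)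
      =ᶠ[nhdsWithin (0:ℝ) (Ioi 0)] (fun γ : ℝ => ∫ y in Ioi (0:ℝ), genTrans1 γ x y f * y ^ γ) := by
    filter_upwards [eventually_mem_nhdsWithin] with γ hγ
    exact (key0 γ hγ).symm
  refine Tendsto.congr' hev ?_
  -- dominated convergence
  obtain ⟨C, hC⟩ := hf.bounded_above_of_compact_support hsupp
  have hC0 : 0 ≤ C := le_trans (norm_nonneg _) (hC 0)
  obtain ⟨M₀, hM₀⟩ := hsupp.isBounded.subset_closedBall 0
  set M : ℝ := max M₀ 1 with hM
  have hM1 : (1:ℝ) ≤ M := le_max_right _ _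
  have hMf : ∀ t : ℝ, M < |t| → f t = 0 := by
    intro t ht
    apply image_eq_zero_of_notMem_tsupport
    intro hmem
    have := hM₀ hmem
    rw [Metric.mem_closedBall, Real.dist_eq, sub_zero] at this
    have : |t| ≤ M := le_trans this (le_max_left _ _)
    linarith
  refine tendsto_integral_filter_of_dominated_convergence
    ((Ioc (0:ℝ) M).indicator fun _ => C * M) ?_ ?_ ?_ ?_
  · exact Eventually.of_forall fun γ =>
      (hf.measurable.mul (by fun_prop : Measurable fun t : ℝ => t ^ γ)).aestronglyMeasurable
  · filter_upwards [Ioo_mem_nhdsGT_of_mem (by constructor <;> norm_num : (0:ℝ) ∈ Ico (0:ℝ) 1)]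
      with γ hγ
    refine (ae_restrict_iff' measurableSet_Ioi).2 (ae_of_all _ fun t ht => ?_)
    have ht : (0:ℝ) < t := ht
    rcases le_or_gt t M with h | h
    · rw [Set.indicator_of_mem (mem_Ioc.2 ⟨ht, h⟩)]
      rw [Real.norm_eq_abs, abs_mul, abs_of_nonneg (Real.rpow_nonneg ht.le γ)]
      have htγ : t ^ γ ≤ M := by
        rcases le_or_gt t 1 with h1 | h1
        · exact le_trans (Real.rpow_le_one ht.le h1 hγ.1.le) hM1
        · calc t ^ γ ≤ t ^ (1:ℝ) := Real.rpow_le_rpow_of_exponent_le h1.le hγ.2.le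
            _ = t := Real.rpow_one t
            _ ≤ M := h
      exact mul_le_mul (by rw [← Real.norm_eq_abs]; exact hC t) htγ
        (Real.rpow_nonneg ht.le γ) hC0
    · rw [hMf t (by rwa [abs_of_pos ht]), zero_mul, norm_zero]
      exact Set.indicator_nonneg (fun _ _ => mul_nonneg hC0 (by linarith)) _
  · exact ((integrableOn_const measure_Ioc_lt_top.ne).integrable_indicator
      measurableSet_Ioc).integrableOn
  · refine (ae_restrict_iff' measurableSet_Ioi).2 (ae_of_all _ fun t ht => ?_)
    have ht : (0:ℝ) < t := ht
    have h1 : Tendsto (fun γ : ℝ => t ^ γ) (nhdsWithin (0:ℝ) (Ioi 0)) (nhds 1) := by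
      have h := (Real.continuousAt_const_rpow (b := (0:ℝ)) (ne_of_gt ht)).tendsto
      rw [Real.rpow_zero] at h
      exact h.mono_left nhdsWithin_le_nhds
    simpa using (tendsto_const_nhds (x := f t)).mul h1
end
end
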